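/- For every integer n ≥ 3, the matching preclusion number of the n-dimensional bubble-sort star graph BS_n equals 2n − 3; that is, the minimum cardinality of a set F of edges of BS_n such that BS_n − F has no perfect matching (and no almost-perfect matching) is 2n − 3. -/

import Mathlib

/-- The generating relation of the bubble-sort star graph: `u = v ∘ ⟨1,i⟩` for some
`i ∈ [2,n]` (0-based: swap of positions `0` and `i` with `i ≠ 0`), or `u = v ∘ ⟨i-1,i⟩`
for some `i ∈ [3,n]` (0-based: swap of consecutive positions `i, j = i+1` with `i ≥ 1`). -/
def bssRel (n : ℕ) (u v : Equiv.Perm (Fin n)) : Prop :=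
  (∃ i : Fin n, (i : ℕ) ≠ 0 ∧ u = v * Equiv.swap ⟨0, i.pos⟩ i) ∨
  (∃ i j : Fin n, (i : ℕ) + 1 = (j : ℕ) ∧ 1 ≤ (i : ℕ) ∧ u = v * Equiv.swap i j)

/-- The `n`-dimensional bubble-sort star graph `BS_n`, on the permutations of `{1,…,n}`. -/
def BS (n : ℕ) : SimpleGraph (Equiv.Perm (Fin n)) := SimpleGraph.fromRel (bssRel n)

/-- A set of edges `M` is a perfect matching of `G`: `M` consists of edges of `G` and
every vertex lies in exactly one edge of `M`. -/
def IsPM {V : Type*} (G : SimpleGraph V) (M : Set (Sym2 V)) : Prop :=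
  M ⊆ G.edgeSet ∧ ∀ v : V, ∃! e : Sym2 V, e ∈ M ∧ v ∈ e

/-- A set of edges `M` is an almost-perfect matching of `G`: there is exactly one
vertex lying in no edge of `M`, and every other vertex lies in exactly one edge of `M`. -/
def IsAPM {V : Type*} (G : SimpleGraph V) (M : Set (Sym2 V)) : Prop :=
  M ⊆ G.edgeSet ∧ ∃ w : V, (∀ e ∈ M, w ∉ e) ∧ ∀ v : V, v ≠ w → ∃! e : Sym2 V, e ∈ M ∧ v ∈ e

/-- `G` has neither a perfect matching nor an almost-perfect matching. -/
def HasNoMatchings {V : Type*} (G : SimpleGraph V) : Prop :=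
  (¬ ∃ M, IsPM G M) ∧ (¬ ∃ M, IsAPM G M)

/-- `(S, F)` is a strong matching preclusion set of `G`: deleting the vertices of `S`
(with all incident edges) and the edges of `F` leaves a graph with neither a perfect
matching nor an almost-perfect matching. -/
def IsSMPSet {V : Type*} (G : SimpleGraph V) (S : Set V) (F : Set (Sym2 V)) : Prop :=
  F ⊆ G.edgeSet ∧ HasNoMatchings ((G.deleteEdges F).induce (Sᶜ : Set V))

/-- `F` is a matching preclusion set of `G`: `G - F` has neither a perfect matching
nor an almost-perfect matching. -/
def IsMPSet {V : Type*} (G : SimpleGraph V) (F : Set (Sym2 V)) : Prop :=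
  F ⊆ G.edgeSet ∧ HasNoMatchings (G.deleteEdges F)

/-- `BS_n^i`: the set of permutations whose last entry equals `i`. -/
def BSslice {n : ℕ} (i : Fin n) : Set (Equiv.Perm (Fin n)) :=
  {a | a ⟨n - 1, Nat.sub_lt i.pos Nat.one_pos⟩ = i}

/-- `(V₁, V₂)` is a bipartition of `G`: the two classes partition the vertices and every
edge has one end in each class. -/
def Bipartition {V : Type*} (G : SimpleGraph V) (V1 V2 : Set V) : Prop :=
  Disjoint V1 V2 ∧ V1 ∪ V2 = Set.univ ∧
    ∀ ⦃u v⦄, G.Adj u v → (u ∈ V1 ∧ v ∈ V2) ∨ (u ∈ V2 ∧ v ∈ V1)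

-- auxiliary development

/-- The generator transpositions. -/
def isGen (n : ℕ) (t : Equiv.Perm (Fin n)) : Prop :=
  (∃ i : Fin n, (i : ℕ) ≠ 0 ∧ t = Equiv.swap ⟨0, i.pos⟩ i) ∨
  (∃ i j : Fin n, (i : ℕ) + 1 = (j : ℕ) ∧ 1 ≤ (i : ℕ) ∧ t = Equiv.swap i j)

lemma bssRel_iff {n : ℕ} (u v : Equiv.Perm (Fin n)) :
    bssRel n u v ↔ ∃ t, isGen n t ∧ u = v * t := by
  constructor
  · rintro (⟨i, hi, h⟩ | ⟨i, j, hij, hi, h⟩)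
    · exact ⟨_, Or.inl ⟨i, hi, rfl⟩, h⟩
    · exact ⟨_, Or.inr ⟨i, j, hij, hi, rfl⟩, h⟩
  · rintro ⟨t, (⟨i, hi, rfl⟩ | ⟨i, j, hij, hi, rfl⟩), h⟩
    · exact Or.inl ⟨i, hi, h⟩
    · exact Or.inr ⟨i, j, hij, hi, h⟩

lemma isGen.ne_one {n : ℕ} {t : Equiv.Perm (Fin n)} (h : isGen n t) : t ≠ 1 := by
  rcases h with ⟨i, hi, rfl⟩ | ⟨i, j, hij, hi, rfl⟩ <;> rw [Ne, Equiv.swap_eq_one_iff]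
  · intro h; apply hi; rw [← h]
  · intro h; rw [h] at hij; omega

lemma isGen.mul_self {n : ℕ} {t : Equiv.Perm (Fin n)} (h : isGen n t) : t * t = 1 := by
  rcases h with ⟨i, hi, rfl⟩ | ⟨i, j, hij, hi, rfl⟩ <;> exact Equiv.swap_mul_self _ _

lemma BS_adj {n : ℕ} {u v : Equiv.Perm (Fin n)} :
    (BS n).Adj u v ↔ u ≠ v ∧ ∃ t, isGen n t ∧ u = v * t := by
  rw [BS, SimpleGraph.fromRel_adj]
  constructor
  · rintro ⟨hne, h | h⟩
    · exact ⟨hne, (bssRel_iff u v).1 h⟩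
    · obtain ⟨t, ht, hv⟩ := (bssRel_iff v u).1 h
      exact ⟨hne, t, ht, by rw [hv, mul_assoc, ht.mul_self, mul_one]⟩
  · rintro ⟨hne, h⟩
    exact ⟨hne, Or.inl ((bssRel_iff u v).2 h)⟩

/-- The perfect matching associated to a generator. -/
def Mset (n : ℕ) (t : Equiv.Perm (Fin n)) : Set (Sym2 (Equiv.Perm (Fin n))) :=
  {e | ∃ v, e = s(v, v * t)}

lemma Mset_subset {n : ℕ} {t : Equiv.Perm (Fin n)} (h : isGen n t) :
    Mset n t ⊆ (BS n).edgeSet := by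
  rintro e ⟨v, rfl⟩
  rw [SimpleGraph.mem_edgeSet, BS_adj]
  refine ⟨fun hv => h.ne_one ?_, t, h, by rw [mul_assoc, h.mul_self, mul_one]⟩
  have hv' : v * 1 = v * t := by rw [mul_one]; exact hv
  exact (mul_left_cancel hv').symm

lemma mem_Mset_unique {n : ℕ} {t t' : Equiv.Perm (Fin n)} (h : isGen n t) (h' : isGen n t')
    {e : Sym2 (Equiv.Perm (Fin n))} (he : e ∈ Mset n t) (he' : e ∈ Mset n t') : t = t' := by
  obtain ⟨v, rfl⟩ := he
  obtain ⟨u, hu⟩ := he'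
  rcases Sym2.eq_iff.1 hu with ⟨h1, h2⟩ | ⟨h1, h2⟩
  · subst h1; exact mul_left_cancel h2
  · -- v = u * t', v * t = u
    rw [← h2, mul_assoc] at h1
    have : v * 1 = v * (t * t') := by rw [mul_one]; exact h1
    have htt : t * t' = 1 := (mul_left_cancel this).symm
    calc t = t * (t' * t') := by rw [h'.mul_self, mul_one]
    _ = (t * t') * t' := by rw [mul_assoc]
    _ = t' := by rw [htt, one_mul]

lemma Mset_isPM_delete {n : ℕ} {t : Equiv.Perm (Fin n)} (h : isGen n t)
    {F : Set (Sym2 (Equiv.Perm (Fin n)))} (hF : ∀ e ∈ Mset n t, e ∉ F) :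
    IsPM ((BS n).deleteEdges F) (Mset n t) := by
  constructor
  · intro e he
    rw [SimpleGraph.edgeSet_deleteEdges]
    exact ⟨Mset_subset h he, hF e he⟩
  · intro v
    refine ⟨s(v, v * t), ⟨⟨v, rfl⟩, Sym2.mem_mk_left _ _⟩, ?_⟩
    rintro e ⟨⟨u, rfl⟩, hv⟩
    rcases Sym2.mem_iff.1 hv with h1 | h1
    · rw [h1]
    · have hu : u = v * t := by
        rw [h1, mul_assoc, h.mul_self, mul_one]
      rw [hu, mul_assoc, h.mul_self, mul_one, Sym2.eq_swap]

/-- No graph on an even finite vertex set has an almost-perfect matching. -/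
lemma no_APM {V : Type*} [Fintype V] (hV : Even (Fintype.card V)) (G : SimpleGraph V) :
    ¬ ∃ M, IsAPM G M := by
  classical
  rintro ⟨M, hME, w, hw, hcov⟩
  let H : G.Subgraph :=
    { verts := {w}ᶜ
      Adj := fun a b => s(a, b) ∈ M
      adj_sub := fun h => hME h
      edge_vert := fun {a b} h ha => hw _ h (by rw [← ha]; exact Sym2.mem_mk_left a b)
      symm := ⟨fun a b h => by show s(b, a) ∈ M; rwa [Sym2.eq_swap]⟩ }
  have hmatch : H.IsMatching := by
    intro v hv
    obtain ⟨e, ⟨heM, hve⟩, huniq⟩ := hcov v hv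
    refine ⟨Sym2.Mem.other hve, ?_, ?_⟩
    · show s(v, Sym2.Mem.other hve) ∈ M
      rwa [Sym2.other_spec hve]
    · intro y hy
      have : s(v, y) = e := huniq _ ⟨hy, Sym2.mem_mk_left _ _⟩
      rw [← Sym2.other_spec hve] at this
      exact Sym2.congr_right.1 this
  have heven := hmatch.even_card
  have hcard : H.verts.toFinset.card = Fintype.card V - 1 := by
    show ({w}ᶜ : Set V).toFinset.card = _
    rw [Set.toFinset_compl, Set.toFinset_singleton, Finset.card_compl, Finset.card_singleton]
  rw [hcard] at heven
  obtain ⟨a, ha⟩ := hV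
  obtain ⟨b, hb⟩ := heven
  have : 1 ≤ Fintype.card V := Fintype.card_pos_iff.2 ⟨w⟩
  omega

/-- The generators as a finset. -/
def gens (n : ℕ) : Finset (Equiv.Perm (Fin n)) :=
  ((Finset.univ.filter fun i : Fin n => (i : ℕ) ≠ 0).image
      fun i => Equiv.swap ⟨0, i.pos⟩ i) ∪
  ((Finset.univ.filter fun i : Fin n => 1 ≤ (i : ℕ) ∧ (i : ℕ) + 1 < n).image
      fun i => Equiv.swap i ⟨((i : ℕ) + 1) % n, Nat.mod_lt _ i.pos⟩)

lemma mem_gens {n : ℕ} {t : Equiv.Perm (Fin n)} : t ∈ gens n ↔ isGen n t := by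
  simp only [gens, Finset.mem_union, Finset.mem_image, Finset.mem_filter, Finset.mem_univ,
    true_and]
  constructor
  · rintro (⟨i, hi, rfl⟩ | ⟨i, ⟨hi1, hi2⟩, rfl⟩)
    · exact Or.inl ⟨i, hi, rfl⟩
    · refine Or.inr ⟨i, ⟨((i : ℕ) + 1) % n, Nat.mod_lt _ i.pos⟩, ?_, hi1, rfl⟩
      simp [Nat.mod_eq_of_lt hi2]
  · rintro (⟨i, hi, rfl⟩ | ⟨i, j, hij, hi, rfl⟩)
    · exact Or.inl ⟨i, hi, rfl⟩
    · refine Or.inr ⟨i, ⟨hi, by omega⟩, ?_⟩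
      congr 1
      apply Fin.ext
      simp [← hij, Nat.mod_eq_of_lt (show (i:ℕ)+1 < n by omega)]

lemma gens_card {n : ℕ} (hn : 3 ≤ n) : (gens n).card = 2 * n - 3 := by
  classical
  have h1 : (Finset.univ.filter fun i : Fin n => (i : ℕ) ≠ 0).card = n - 1 := by
    refine (Finset.card_bij' (s := Finset.univ.filter fun i : Fin n => (i : ℕ) ≠ 0)
      (t := Finset.range (n - 1)) (fun a _ => (a : ℕ) - 1)
      (fun k hk => ⟨k + 1, by have := Finset.mem_range.1 hk; omega⟩)
      ?_ ?_ ?_ ?_).trans (Finset.card_range _)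
    · intro a ha
      simp only [Finset.mem_filter, Finset.mem_univ, true_and] at ha
      have := a.isLt
      simp only [Finset.mem_range]; omega
    · intro k hk
      have := Finset.mem_range.1 hk
      simp only [Finset.mem_filter, Finset.mem_univ, true_and]; omega
    · intro a ha
      simp only [Finset.mem_filter, Finset.mem_univ, true_and] at ha
      apply Fin.ext; simp; omega
    · intro k hk; simp
  have h2 : (Finset.univ.filter fun i : Fin n => 1 ≤ (i : ℕ) ∧ (i : ℕ) + 1 < n).card
      = n - 2 := by
    refine (Finset.card_bij'
      (s := Finset.univ.filter fun i : Fin n => 1 ≤ (i : ℕ) ∧ (i : ℕ) + 1 < n)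
      (t := Finset.range (n - 2)) (fun a _ => (a : ℕ) - 1)
      (fun k hk => ⟨k + 1, by have := Finset.mem_range.1 hk; omega⟩)
      ?_ ?_ ?_ ?_).trans (Finset.card_range _)
    · intro a ha
      simp only [Finset.mem_filter, Finset.mem_univ, true_and] at ha
      simp only [Finset.mem_range]; omega
    · intro k hk
      have := Finset.mem_range.1 hk
      simp only [Finset.mem_filter, Finset.mem_univ, true_and]; omega
    · intro a ha
      simp only [Finset.mem_filter, Finset.mem_univ, true_and] at ha
      apply Fin.ext; simp; omega
    · intro k hk; simp
  have key : ∀ a b : Fin n, 1 ≤ (a : ℕ) → (a : ℕ) + 1 < n → 1 ≤ (b : ℕ) → (b : ℕ) + 1 < n →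
      Equiv.swap a ⟨((a : ℕ) + 1) % n, Nat.mod_lt _ a.pos⟩
        = Equiv.swap b ⟨((b : ℕ) + 1) % n, Nat.mod_lt _ b.pos⟩ → ¬ ((a : ℕ) < (b : ℕ)) := by
    intro a b ha1 ha2 hb1 hb2 hab hlt
    have h1 := DFunLike.congr_fun hab a
    rw [Equiv.swap_apply_left] at h1
    have hne1 : a ≠ b := by intro h; rw [h] at hlt; omega
    have hne2 : a ≠ (⟨((b : ℕ) + 1) % n, Nat.mod_lt _ b.pos⟩ : Fin n) := by
      intro h; have h' := congrArg Fin.val h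
      simp at h'
      rw [Nat.mod_eq_of_lt hb2] at h'
      omega
    rw [Equiv.swap_apply_of_ne_of_ne hne1 hne2] at h1
    have h' := congrArg Fin.val h1
    simp at h'
    rw [Nat.mod_eq_of_lt ha2] at h'
    omega
  rw [gens, Finset.card_union_of_disjoint, Finset.card_image_of_injOn,
    Finset.card_image_of_injOn, h1, h2]
  · omega
  · -- injectivity of second image
    intro a ha b hb hab
    simp only [Finset.coe_filter, Set.mem_setOf_eq, Finset.mem_univ, true_and] at ha hb
    rcases Nat.lt_trichotomy (a : ℕ) (b : ℕ) with h | h | h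
    · exact absurd h (key a b ha.1 ha.2 hb.1 hb.2 hab)
    · exact Fin.ext h
    · exact absurd h (key b a hb.1 hb.2 ha.1 ha.2 hab.symm)
  · -- injectivity of first image
    intro a ha b hb hab
    have h1 := DFunLike.congr_fun hab (⟨0, a.pos⟩ : Fin n)
    rw [Equiv.swap_apply_left] at h1
    have heq : (⟨0, a.pos⟩ : Fin n) = ⟨0, b.pos⟩ := rfl
    rw [heq, Equiv.swap_apply_left] at h1
    exact h1
  · -- disjointness
    rw [Finset.disjoint_left]
    rintro t ht1 ht2
    simp only [Finset.mem_image, Finset.mem_filter, Finset.mem_univ, true_and] at ht1 ht2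
    obtain ⟨i, hi, rfl⟩ := ht1
    obtain ⟨a, ⟨ha1, ha2⟩, hsw⟩ := ht2
    have h1 := DFunLike.congr_fun hsw (⟨0, i.pos⟩ : Fin n)
    rw [Equiv.swap_apply_left] at h1
    have hne1 : (⟨0, i.pos⟩ : Fin n) ≠ a := by
      intro h; have := congrArg Fin.val h; simp at this; omega
    have hne2 : (⟨0, i.pos⟩ : Fin n) ≠ ⟨((a : ℕ) + 1) % n, Nat.mod_lt _ a.pos⟩ := by
      intro h; have h' := congrArg Fin.val h
      simp at h'
      rw [Nat.mod_eq_of_lt ha2] at h'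
      omega
    rw [Equiv.swap_apply_of_ne_of_ne hne1 hne2] at h1
    have := congrArg Fin.val h1
    simp at this
    omega


/-- For every `n ≥ 3`, the matching preclusion number of `BS_n` equals `2n - 3`:
`2n - 3` is the least possible size of a matching preclusion set of `BS_n`. -/
theorem mp_bubbleSortStar (n : ℕ) (hn : 3 ≤ n) :
    IsLeast {k : ℕ | ∃ F : Set (Sym2 (Equiv.Perm (Fin n))),
      IsMPSet (BS n) F ∧ k = F.ncard} (2 * n - 3) := by
  classical
  have heven : Even (Fintype.card (Equiv.Perm (Fin n))) := by
    rw [Fintype.card_perm, Fintype.card_fin]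
    obtain ⟨c, hc⟩ := Nat.dvd_factorial (show 0 < 2 by norm_num) (show 2 ≤ n by omega)
    exact ⟨c, by omega⟩
  constructor
  · -- membership: delete all edges at the identity
    refine ⟨(fun t => s((1 : Equiv.Perm (Fin n)), t)) '' ↑(gens n), ⟨?_, ?_, ?_⟩, ?_⟩
    · rintro e ⟨t, ht, rfl⟩
      rw [Finset.mem_coe, mem_gens] at ht
      rw [SimpleGraph.mem_edgeSet, BS_adj]
      exact ⟨(ht.ne_one ∘ Eq.symm), t, ht, by rw [ht.mul_self]⟩
    · -- no PM: identity is isolated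
      rintro ⟨M, hM, hcov⟩
      obtain ⟨e, ⟨heM, h1e⟩, -⟩ := hcov 1
      have he := hM heM
      rw [SimpleGraph.edgeSet_deleteEdges] at he
      obtain ⟨hedge, hnF⟩ := he
      apply hnF
      induction e using Sym2.ind with
      | _ a b =>
        rw [SimpleGraph.mem_edgeSet] at hedge
        rcases Sym2.mem_iff.1 h1e with h1a | h1b
        · subst h1a
          obtain ⟨-, t, ht, h1⟩ := BS_adj.1 hedge
          have hb : b = t := by
            calc b = b * (t * t) := by rw [ht.mul_self, mul_one]
            _ = (b * t) * t := by rw [mul_assoc]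
            _ = t := by rw [← h1, one_mul]
          exact ⟨b, by rw [Finset.mem_coe, mem_gens, hb]; exact ht, rfl⟩
        · subst h1b
          obtain ⟨-, t, ht, h1⟩ := BS_adj.1 hedge
          rw [one_mul] at h1
          subst h1
          exact ⟨a, by rw [Finset.mem_coe, mem_gens]; exact ht, Sym2.eq_swap.symm⟩
    · -- no APM
      exact no_APM heven _
    · -- cardinality
      rw [Set.ncard_image_of_injOn, Set.ncard_coe_finset, gens_card hn]
      intro a ha b hb hab
      rw [Finset.mem_coe, mem_gens] at ha hb
      rcases Sym2.eq_iff.1 hab with ⟨-, h⟩ | ⟨h1, h2⟩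
      · exact h
      · exact absurd h1.symm hb.ne_one
  · -- lower bound
    rintro k ⟨F, ⟨hFE, hnoPM, -⟩, rfl⟩
    have hchoice : ∀ t ∈ gens n, ∃ e, e ∈ Mset n t ∧ e ∈ F := by
      intro t ht
      rw [mem_gens] at ht
      by_contra hc
      push_neg at hc
      exact hnoPM ⟨Mset n t, Mset_isPM_delete ht hc⟩
    have hle : ((gens n : Set (Equiv.Perm (Fin n)))).ncard ≤ F.ncard := by
      refine Set.ncard_le_ncard_of_injOn
        (fun t => if h : t ∈ gens n then (hchoice t h).choose else s(1,1)) ?_ ?_ (Set.toFinite F)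
      · intro t ht
        rw [Finset.mem_coe] at ht
        simp only [ht, dif_pos]
        exact ((hchoice t ht).choose_spec).2
      · intro a ha b hb hab
        rw [Finset.mem_coe] at ha hb
        simp only [ha, hb, dif_pos] at hab
        have hma := ((hchoice a ha).choose_spec).1
        have hmb := ((hchoice b hb).choose_spec).1
        rw [hab] at hma
        exact mem_Mset_unique (mem_gens.1 ha) (mem_gens.1 hb) hma hmb
    rwa [Set.ncard_coe_finset, gens_card hn] at hle
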